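/- (Existence and uniqueness for the concurrent delay model.) If τ₀ > 0, the coefficient functions α, β₀, β₁, …, β_J are continuous on T = [t₀, T₁], Z is p-th moment continuous, each U_j is p-th moment continuous on [t₀ − τ_j, T₁ − τ_j], and the initial condition process g is p-th moment continuous on [t₀ − τ₀, t₀], then the random delay differential equation X′(t) = α(t) + β₀(t)X(t − τ₀) + Σ_j β_j(t)U_j(t − τ_j) + Z(t) on [t₀, T₁], with X(t) = g(t) on [t₀ − τ₀, t₀], has a unique solution in the Lp sense. -/

import Mathlib

open MeasureTheory Set Filter intervalIntegral
open scoped ENNReal BigOperators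

section Aux
variable {E : Type*} [NormedAddCommGroup E] [NormedSpace ℝ E] [CompleteSpace E]

/-- Picard iterates for the delay equation. -/
noncomputable def delayPicard (t₀ τ₀ : ℝ) (b : ℝ → ℝ) (h g : ℝ → E) : ℕ → ℝ → E
  | 0 => fun t => g (min t t₀)
  | (n + 1) => fun t =>
      g (min t t₀) + ∫ s in t₀..(max t t₀), (h s + b s • delayPicard t₀ τ₀ b h g n (s - τ₀))

variable {t₀ T₁ τ₀ : ℝ} {b : ℝ → ℝ} {h g : ℝ → E}

lemma delayF_cont (ht₀T₁ : t₀ ≤ T₁) (hτ₀ : 0 < τ₀)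
    (hb : ContinuousOn b (Icc t₀ T₁)) (hh : ContinuousOn h (Icc t₀ T₁))
    {X : ℝ → E} (hX : ContinuousOn X (Icc (t₀ - τ₀) T₁)) :
    ContinuousOn (fun s => h s + b s • X (s - τ₀)) (Icc t₀ T₁) := by
  refine hh.add (hb.smul (hX.comp ((continuous_id.sub continuous_const).continuousOn) ?_))
  intro s hs
  exact ⟨by simp only [id]; linarith [hs.1], by simp only [id]; linarith [hs.2]⟩

lemma delayPicard_cont (ht₀T₁ : t₀ ≤ T₁) (hτ₀ : 0 < τ₀)
    (hb : ContinuousOn b (Icc t₀ T₁)) (hh : ContinuousOn h (Icc t₀ T₁))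
    (hg : ContinuousOn g (Icc (t₀ - τ₀) t₀)) :
    ∀ n, ContinuousOn (delayPicard t₀ τ₀ b h g n) (Icc (t₀ - τ₀) T₁) := by
  have hgmin : ContinuousOn (fun t => g (min t t₀)) (Icc (t₀ - τ₀) T₁) := by
    refine hg.comp ((continuous_id.min continuous_const).continuousOn) ?_
    intro t ht
    exact ⟨le_min ht.1 (by linarith), min_le_right _ _⟩
  intro n
  induction n with
  | zero => exact hgmin
  | succ n ih =>
    have hFc := delayF_cont ht₀T₁ hτ₀ hb hh ih
    have hFi : IntervalIntegrable (fun s => h s + b s • delayPicard t₀ τ₀ b h g n (s - τ₀))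
        MeasureTheory.volume t₀ T₁ := by
      apply ContinuousOn.intervalIntegrable
      rwa [uIcc_of_le ht₀T₁]
    have hprim : ContinuousOn
        (fun u => ∫ s in t₀..u, (h s + b s • delayPicard t₀ τ₀ b h g n (s - τ₀)))
        (Icc t₀ T₁) := by
      have := continuousOn_primitive_interval' hFi
        (by rw [uIcc_of_le ht₀T₁]; exact left_mem_Icc.2 ht₀T₁)
      rwa [uIcc_of_le ht₀T₁] at this
    show ContinuousOn (fun t => g (min t t₀) + _) _
    refine hgmin.add (hprim.comp ((continuous_id.max continuous_const).continuousOn) ?_)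
    intro t ht
    exact ⟨le_max_right _ _, max_le ht.2 ht₀T₁⟩

lemma delayPicard_stab (hτ₀ : 0 < τ₀) :
    ∀ n, EqOn (delayPicard t₀ τ₀ b h g (n + 1)) (delayPicard t₀ τ₀ b h g n)
      (Icc (t₀ - τ₀) (t₀ + n * τ₀)) := by
  intro n
  induction n with
  | zero =>
    intro t ht
    simp only [Nat.cast_zero, zero_mul, add_zero] at ht
    show g (min t t₀) + _ = g (min t t₀)
    rw [max_eq_right ht.2, intervalIntegral.integral_same, add_zero]
  | succ n ih =>
    intro t ht
    show g (min t t₀) + _ = g (min t t₀) + _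
    congr 1
    apply intervalIntegral.integral_congr
    intro s hs
    rw [uIcc_of_le (le_max_right t t₀)] at hs
    have hs1 : t₀ ≤ s := hs.1
    have hs2 : s ≤ t₀ + (n + 1) * τ₀ := by
      refine hs.2.trans (max_le ?_ (by nlinarith [Nat.cast_nonneg (α := ℝ) n]))
      push_cast at ht ⊢; linarith [ht.2]
    have : s - τ₀ ∈ Icc (t₀ - τ₀) (t₀ + n * τ₀) := ⟨by linarith, by push_cast at hs2 ⊢; linarith⟩
    simp only
    rw [ih this]

/-- Abstract existence and uniqueness for the delay linear ODE in a Banach space. -/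
lemma delay_ode_exists_unique (ht₀T₁ : t₀ ≤ T₁) (hτ₀ : 0 < τ₀)
    (hb : ContinuousOn b (Icc t₀ T₁)) (hh : ContinuousOn h (Icc t₀ T₁))
    (hg : ContinuousOn g (Icc (t₀ - τ₀) t₀)) :
    ∃ X : ℝ → E,
      (ContinuousOn X (Icc (t₀ - τ₀) T₁) ∧
        (∀ t ∈ Icc t₀ T₁, HasDerivWithinAt X (h t + b t • X (t - τ₀)) (Icc t₀ T₁) t) ∧
        (∀ t ∈ Icc (t₀ - τ₀) t₀, X t = g t)) ∧
      ∀ Y : ℝ → E,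
        (ContinuousOn Y (Icc (t₀ - τ₀) T₁) ∧
          (∀ t ∈ Icc t₀ T₁, HasDerivWithinAt Y (h t + b t • Y (t - τ₀)) (Icc t₀ T₁) t) ∧
          (∀ t ∈ Icc (t₀ - τ₀) t₀, Y t = g t)) →
        EqOn Y X (Icc (t₀ - τ₀) T₁) := by
  classical
  -- choose N with T₁ ≤ t₀ + N * τ₀
  obtain ⟨N, hN⟩ := exists_nat_ge ((T₁ - t₀) / τ₀)
  have hNτ : T₁ ≤ t₀ + N * τ₀ := by
    rw [div_le_iff₀ hτ₀] at hN; linarith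
  set X : ℝ → E := delayPicard t₀ τ₀ b h g (N + 1) with hXdef
  have hXc : ContinuousOn X (Icc (t₀ - τ₀) T₁) :=
    delayPicard_cont ht₀T₁ hτ₀ hb hh hg (N + 1)
  have hstab := delayPicard_stab (t₀ := t₀) (b := b) (h := h) (g := g) hτ₀ N
  -- fixed point equation
  have hfix : ∀ t ∈ Icc (t₀ - τ₀) T₁,
      X t = g (min t t₀) + ∫ s in t₀..(max t t₀), (h s + b s • X (s - τ₀)) := by
    intro t ht
    show g (min t t₀) + _ = g (min t t₀) + _
    congr 1
    apply intervalIntegral.integral_congr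
    intro s hs
    rw [uIcc_of_le (le_max_right t t₀)] at hs
    have hs2 : s ≤ T₁ := hs.2.trans (max_le ht.2 ht₀T₁)
    have h3 : s - τ₀ ∈ Icc (t₀ - τ₀) (t₀ + N * τ₀) := ⟨by linarith [hs.1], by linarith⟩
    simp only
    rw [show X (s - τ₀) = delayPicard t₀ τ₀ b h g N (s - τ₀) from hstab h3]
  -- initial condition
  have hXinit : ∀ t ∈ Icc (t₀ - τ₀) t₀, X t = g t := by
    intro t ht
    rw [hfix t ⟨ht.1, ht.2.trans ht₀T₁⟩, max_eq_right ht.2, intervalIntegral.integral_same,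
      add_zero, min_eq_left ht.2]
  -- derivative
  have hFXc : ContinuousOn (fun s => h s + b s • X (s - τ₀)) (Icc t₀ T₁) :=
    delayF_cont ht₀T₁ hτ₀ hb hh hXc
  have hXder : ∀ t ∈ Icc t₀ T₁,
      HasDerivWithinAt X (h t + b t • X (t - τ₀)) (Icc t₀ T₁) t := by
    intro t ht
    haveI : Fact (t ∈ Icc t₀ T₁) := ⟨ht⟩
    have hFi : IntervalIntegrable (fun s => h s + b s • X (s - τ₀))
        MeasureTheory.volume t₀ t := by
      apply ContinuousOn.intervalIntegrable
      rw [uIcc_of_le ht.1]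
      exact hFXc.mono (Icc_subset_Icc le_rfl ht.2)
    have hd : HasDerivWithinAt (fun u => g t₀ + ∫ s in t₀..u, (h s + b s • X (s - τ₀)))
        (h t + b t • X (t - τ₀)) (Icc t₀ T₁) t := by
      exact (intervalIntegral.integral_hasDerivWithinAt_right hFi
        (hFXc.stronglyMeasurableAtFilter_nhdsWithin measurableSet_Icc t)
        (hFXc t ht)).const_add _
    refine hd.congr (fun u hu => ?_) ?_
    · rw [hfix u ⟨by linarith [hu.1], hu.2⟩, min_eq_right hu.1, max_eq_left hu.1]
    · rw [hfix t ⟨by linarith [ht.1], ht.2⟩, min_eq_right ht.1, max_eq_left ht.1]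
  refine ⟨X, ⟨hXc, hXder, hXinit⟩, ?_⟩
  -- uniqueness
  rintro Y ⟨hYc, hYd, hYi⟩
  -- integral equation for a solution
  have hint : ∀ W : ℝ → E, ContinuousOn W (Icc (t₀ - τ₀) T₁) →
      (∀ t ∈ Icc t₀ T₁, HasDerivWithinAt W (h t + b t • W (t - τ₀)) (Icc t₀ T₁) t) →
      (∀ t ∈ Icc (t₀ - τ₀) t₀, W t = g t) →
      ∀ t ∈ Icc t₀ T₁, W t = g t₀ + ∫ s in t₀..t, (h s + b s • W (s - τ₀)) := by
    intro W hWc hWd hWi t ht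
    have hFWc : ContinuousOn (fun s => h s + b s • W (s - τ₀)) (Icc t₀ T₁) :=
      delayF_cont ht₀T₁ hτ₀ hb hh hWc
    have key : (∫ s in t₀..t, (h s + b s • W (s - τ₀))) = W t - W t₀ := by
      apply intervalIntegral.integral_eq_sub_of_hasDeriv_right_of_le ht.1
      · exact hWc.mono (Icc_subset_Icc (by linarith [hτ₀.le]) ht.2)
      · intro x hx
        have hx' : x ∈ Icc t₀ T₁ := ⟨hx.1.le, hx.2.le.trans ht.2⟩
        exact (hWd x hx').mono_of_mem_nhdsWithin
          (Icc_mem_nhdsGT_of_mem ⟨hx.1.le, lt_of_lt_of_le hx.2 ht.2⟩)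
      · apply ContinuousOn.intervalIntegrable
        rw [uIcc_of_le ht.1]
        exact hFWc.mono (Icc_subset_Icc le_rfl ht.2)
    have hW0 : W t₀ = g t₀ := hWi t₀ ⟨by linarith, le_rfl⟩
    rw [key, hW0]; abel
  have hXint := hint X hXc hXder hXinit
  have hYint := hint Y hYc hYd hYi
  -- stepwise uniqueness
  have main : ∀ n : ℕ, ∀ t ∈ Icc (t₀ - τ₀) T₁, t ≤ t₀ + n * τ₀ → Y t = X t := by
    intro n
    induction n with
    | zero =>
      intro t ht hle
      simp only [Nat.cast_zero, zero_mul, add_zero] at hle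
      rw [hYi t ⟨ht.1, hle⟩, hXinit t ⟨ht.1, hle⟩]
    | succ n ih =>
      intro t ht hle
      by_cases htle : t ≤ t₀
      · rw [hYi t ⟨ht.1, htle⟩, hXinit t ⟨ht.1, htle⟩]
      · push_neg at htle
        have ht' : t ∈ Icc t₀ T₁ := ⟨htle.le, ht.2⟩
        rw [hYint t ht', hXint t ht']
        congr 1
        apply intervalIntegral.integral_congr
        intro s hs
        rw [uIcc_of_le ht'.1] at hs
        have h1 : s - τ₀ ∈ Icc (t₀ - τ₀) T₁ :=
          ⟨by linarith [hs.1], by linarith [hs.2.trans ht.2]⟩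
        have h2 : s - τ₀ ≤ t₀ + n * τ₀ := by
          push_cast at hle; linarith [hs.2]
        simp only
        rw [ih _ h1 h2]
  intro t ht
  obtain ⟨n, hn⟩ := exists_nat_ge ((T₁ - t₀) / τ₀)
  have : T₁ ≤ t₀ + n * τ₀ := by rw [div_le_iff₀ hτ₀] at hn; linarith
  exact main n t ht (ht.2.trans this)

end Aux

/-- Existence and uniqueness (in the Lp sense) of the solution of the functional concurrent
random delay differential equation
`X′(t) = α(t) + β₀(t)X(t−τ₀) + Σ_j β_j(t)U_j(t−τ_j) + Z(t)` on `[t₀, T₁]` with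
initial condition `X = g` on `[t₀ − τ₀, t₀]`, when `τ₀ > 0`, the coefficient functions are
continuous, `Z`, the `U_j` and `g` are p-th moment continuous. A solution is p-th moment
continuous on `[t₀ − τ₀, T₁]` and p-th moment differentiable on `[t₀, T₁]` with the stated
Lp derivative. -/
theorem stmt6 {Ω : Type*} [MeasurableSpace Ω] {μ : Measure Ω} [IsProbabilityMeasure μ]
    {p : ℝ≥0∞} [Fact (1 ≤ p)] (t₀ T₁ : ℝ) (ht₀T₁ : t₀ ≤ T₁)
    (τ₀ : ℝ) (hτ₀ : 0 < τ₀)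
    (J : ℕ) (τ : Fin J → ℝ) (hτ : ∀ j, 0 ≤ τ j)
    (α β₀ : ℝ → ℝ) (β : Fin J → ℝ → ℝ)
    (hα : ContinuousOn α (Icc t₀ T₁)) (hβ₀ : ContinuousOn β₀ (Icc t₀ T₁))
    (hβ : ∀ j, ContinuousOn (β j) (Icc t₀ T₁))
    (Z : ℝ → Lp ℝ p μ) (hZ : ContinuousOn Z (Icc t₀ T₁))
    (U : Fin J → ℝ → Lp ℝ p μ)
    (hU : ∀ j, ContinuousOn (U j) (Icc (t₀ - τ j) (T₁ - τ j)))
    (g : ℝ → Lp ℝ p μ) (hg : ContinuousOn g (Icc (t₀ - τ₀) t₀)) :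
    ∃ X : ℝ → Lp ℝ p μ,
      (ContinuousOn X (Icc (t₀ - τ₀) T₁) ∧
        (∀ t ∈ Icc t₀ T₁, HasDerivWithinAt X
          ((Lp.const p μ (α t) : Lp ℝ p μ) + β₀ t • X (t - τ₀) +
            ∑ j, β j t • U j (t - τ j) + Z t) (Icc t₀ T₁) t) ∧
        (∀ t ∈ Icc (t₀ - τ₀) t₀, X t = g t)) ∧
      ∀ Y : ℝ → Lp ℝ p μ,
        (ContinuousOn Y (Icc (t₀ - τ₀) T₁) ∧
          (∀ t ∈ Icc t₀ T₁, HasDerivWithinAt Y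
            ((Lp.const p μ (α t) : Lp ℝ p μ) + β₀ t • Y (t - τ₀) +
              ∑ j, β j t • U j (t - τ j) + Z t) (Icc t₀ T₁) t) ∧
          (∀ t ∈ Icc (t₀ - τ₀) t₀, Y t = g t)) →
        EqOn Y X (Icc (t₀ - τ₀) T₁) := by
  set h : ℝ → Lp ℝ p μ := fun t =>
    (Lp.const p μ (α t) : Lp ℝ p μ) + ∑ j, β j t • U j (t - τ j) + Z t with hhdef
  have hh : ContinuousOn h (Icc t₀ T₁) := by
    refine ContinuousOn.add (ContinuousOn.add ?_ ?_) hZ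
    · exact (Lp.constL p μ ℝ).continuous.comp_continuousOn hα
    · refine continuousOn_finset_sum _ (fun j _ => ?_)
      refine (hβ j).smul ((hU j).comp ((continuous_id.sub continuous_const).continuousOn) ?_)
      intro t ht
      exact ⟨by simp only [id]; linarith [ht.1], by simp only [id]; linarith [ht.2]⟩
  obtain ⟨X, ⟨hXc, hXd, hXi⟩, huniq⟩ :=
    delay_ode_exists_unique (b := β₀) (h := h) (g := g) ht₀T₁ hτ₀ hβ₀ hh hg
  have hcomm : ∀ (W : ℝ → Lp ℝ p μ) (t : ℝ),
      (Lp.const p μ (α t) : Lp ℝ p μ) + β₀ t • W (t - τ₀) +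
        ∑ j, β j t • U j (t - τ j) + Z t = h t + β₀ t • W (t - τ₀) := by
    intro W t
    simp only [hhdef]
    abel
  refine ⟨X, ⟨hXc, fun t ht => ?_, hXi⟩, ?_⟩
  · rw [hcomm X t]
    exact hXd t ht
  · rintro Y ⟨hYc, hYd, hYi⟩
    refine huniq Y ⟨hYc, fun t ht => ?_, hYi⟩
    rw [← hcomm Y t]
    exact hYd t ht
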